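/- arXiv:2403.19431 — 4 statements merged into one kernel-verified Lean document; each statement's English description precedes it below -/
import Mathlib

section
/- If Γ is valid at a base ℬ given a set of S5-modal relations 𝔯_A (i.e., Γ ⊩_{ℬ,𝔯_A} φ) and ℬ ⊆ 𝒞, then Γ ⊩_{𝒞,𝔯_A} φ. In particular, validity of any formula is monotone under base extension. -/
/-- A base rule: a finite set of premiss atoms and a conclusion atom. -/
abbrev Rule := Finset ℕ × ℕ

/-- A base is a collection of base rules. -/
abbrev Base := Set Rule

/-- Derivability of an atom in a base: closure of ∅ under the rules. -/
inductive Deriv (B : Base) : ℕ → Prop where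
  | step (L : Finset ℕ) (p : ℕ) (mem : (L, p) ∈ B)
      (prem : ∀ q ∈ L, Deriv B q) : Deriv B p

/-- A base is inconsistent iff every atom is derivable in it. -/
def Inconsistent (B : Base) : Prop := ∀ p : ℕ, Deriv B p

/-- Formulae of the multi-agent modal language over agents `A`. -/
inductive Form (A : Type) where
  | atom : ℕ → Form A
  | bot  : Form A
  | imp  : Form A → Form A → Form A
  | K    : A → Form A → Form A

/-- Negation abbreviation ¬φ := φ → ⊥. -/
def Form.neg {A : Type} (φ : Form A) : Form A := Form.imp φ Form.bot

/-- Validity at a base given a family of relations on bases. -/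
def Valid {A : Type} (R : A → Base → Base → Prop) : Base → Form A → Prop
  | B, .atom p => Deriv B p
  | B, .bot => ∀ p : ℕ, Deriv B p
  | B, .imp φ ψ => ∀ C : Base, B ⊆ C → Valid R C φ → Valid R C ψ
  | B, .K a φ => ∀ C : Base, R a B C → Valid R C φ

/-- Validity of φ at ℬ from a (nonempty) set of assumptions Γ. -/
def GammaValid {A : Type} (R : A → Base → Base → Prop)
    (Γ : Set (Form A)) (B : Base) (φ : Form A) : Prop :=
  ∀ C : Base, B ⊆ C → (∀ ψ ∈ Γ, Valid R C ψ) → Valid R C φ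

def Euclidean {X : Sort*} (r : X → X → Prop) : Prop :=
  ∀ x y z, r x y → r x z → r y z

/-- S5-modal relations on bases. -/
structure S5Rel (r : Base → Base → Prop) : Prop where
  incon_succ : ∀ B, Inconsistent B →
    (∃ C, r B C ∧ Inconsistent C) ∧ ∀ D, r B D → Inconsistent D
  con_succ : ∀ B, ¬ Inconsistent B → ∀ C, r B C → ¬ Inconsistent C
  zig : ∀ B C, r B C → ∀ D, B ⊆ D → ¬ Inconsistent D → ∃ E, C ⊆ E ∧ r D E
  zag : ∀ B C, r B C → ¬ Inconsistent C → ∀ D, D ⊆ B → ∃ E, E ⊆ C ∧ r D E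
  refl : ∀ B, r B B
  trans : ∀ B C D, r B C → r C D → r B D
  eucl : ∀ B C D, r B C → r B D → r C D

/-- Maximally-consistent bases. -/
def MaxCon (B : Base) : Prop :=
  ¬ Inconsistent B ∧ ∀ δ : Rule, δ ∈ B ∨ Inconsistent (insert δ B)

/-- A formula is valid iff it is valid at every base for every family of S5-modal relations. -/
def ValidAll {A : Type} (φ : Form A) : Prop :=
  ∀ R : A → Base → Base → Prop, (∀ a, S5Rel (R a)) → ∀ B : Base, Valid R B φ


lemma deriv_mono {B C : Base} (h : B ⊆ C) {p : ℕ} (hd : Deriv B p) : Deriv C p := by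
  induction hd with
  | step L p mem prem ih => exact Deriv.step L p (h mem) ih

lemma incon_valid {A : Type} (R : A → Base → Base → Prop) (hR : ∀ a, S5Rel (R a))
    (φ : Form A) : ∀ B : Base, Inconsistent B → Valid R B φ := by
  induction φ with
  | atom p => exact fun B hB => hB p
  | bot => exact fun B hB => hB
  | imp φ ψ ihφ ihψ => exact fun B hB C hBC _ => ihψ C (fun p => deriv_mono hBC (hB p))
  | K a φ ih => exact fun B hB C hRC => ih C (((hR a).incon_succ B hB).2 C hRC)

lemma valid_mono {A : Type} (R : A → Base → Base → Prop) (hR : ∀ a, S5Rel (R a))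
    (φ : Form A) : ∀ B C : Base, B ⊆ C → Valid R B φ → Valid R C φ := by
  induction φ with
  | atom p => exact fun B C h hd => deriv_mono h hd
  | bot => exact fun B C h hd p => deriv_mono h (hd p)
  | imp φ ψ ihφ ihψ => exact fun B C h hv D hCD hφ => hv D (fun x hx => hCD (h hx)) hφ
  | K a φ ih =>
    intro B C h hv C' hRC'
    by_cases hc : Inconsistent C'
    · exact incon_valid R hR φ C' hc
    · obtain ⟨E, hEC', hRBE⟩ := (hR a).zag C C' hRC' hc B h
      exact ih E C' hEC' (hv E hRBE)

/-- Monotonicity of (Γ-)validity under base extension. -/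
theorem stmt0 {A : Type} (R : A → Base → Base → Prop) (hR : ∀ a, S5Rel (R a))
    (B C : Base) (hBC : B ⊆ C) (φ : Form A) :
    (∀ Γ : Set (Form A), GammaValid R Γ B φ → GammaValid R Γ C φ) ∧
    (Valid R B φ → Valid R C φ) := by
  constructor
  · intro Γ hΓ D hCD hD
    exact hΓ D (fun x hx => hCD (hBC hx)) hD
  · exact valid_mono R hR φ B C hBC
end

section
/- Axiom (2) holds in base-extension semantics for S5: φ→(ψ→χ) ⊩ (φ→ψ)→(φ→χ), i.e., at every base and every set of S5-modal relations, if φ→(ψ→χ) is valid, then (φ→ψ)→(φ→χ) is valid. -/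
/-- Axiom (2): φ→(ψ→χ) ⊩ (φ→ψ)→(φ→χ). -/
theorem stmt10 {A : Type} (φ ψ χ : Form A) (R : A → Base → Base → Prop)
    (hR : ∀ a, S5Rel (R a)) (B : Base) :
    GammaValid R {φ.imp (ψ.imp χ)} B ((φ.imp ψ).imp (φ.imp χ)) := by
  intro C hBC hΓ D hCD hφψ E hDE hφ
  exact hΓ (φ.imp (ψ.imp χ)) rfl E (hCD.trans hDE) hφ E (subset_refl E)
    (hφψ E hDE hφ)
end

section
/- The 5 axiom holds in base-extension semantics for S5: ¬K_aφ ⊩ K_a¬K_aφ (where ¬χ abbreviates χ→⊥), i.e., at every base ℬ and set of S5-modal relations 𝔯_A, if ¬K_aφ is valid at ℬ then K_a¬K_aφ is valid at ℬ. -/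
/-- Axiom 5: ¬K_aφ ⊩ K_a¬K_aφ. -/
theorem stmt15 {A : Type} (a : A) (φ : Form A) (R : A → Base → Base → Prop)
    (hR : ∀ a, S5Rel (R a)) (B : Base) :
    GammaValid R {(Form.K a φ).neg} B (Form.K a (Form.K a φ).neg) := by
  intro C hBC hΓ E hCE F hEF hKF
  have h := hΓ _ (Set.mem_singleton _)
  by_cases hF : Inconsistent F
  · exact hF
  · exfalso
    have hEC : R a E C := (hR a).eucl C E C hCE ((hR a).refl C)
    obtain ⟨G, hCG, hFG⟩ := (hR a).zig E C hEC F hEF hF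
    have hGK : Valid R G (Form.K a φ) := by
      intro H hGH
      exact hKF H ((hR a).trans F G H hFG hGH)
    exact (hR a).con_succ F hF G hFG (h G hCG hGK)
end

section
/- Completeness of base-extension semantics for S5 with respect to the axiom system: every theorem of the multi-agent S5 Hilbert system (axioms 1–3, K, T, 4, 5, rules MP and NEC) is valid in the base-extension semantics for S5. -/
/-- Hilbert-style proof system for multi-agent S5. -/
inductive Prov {A : Type} : Form A → Prop where
  | ax1 (φ ψ : Form A) : Prov (φ.imp (ψ.imp φ))
  | ax2 (φ ψ χ : Form A) :
      Prov ((φ.imp (ψ.imp χ)).imp ((φ.imp ψ).imp (φ.imp χ)))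
  | ax3 (φ ψ : Form A) : Prov ((φ.neg.imp ψ.neg).imp (ψ.imp φ))
  | axK (a : A) (φ ψ : Form A) :
      Prov ((Form.K a (φ.imp ψ)).imp ((Form.K a φ).imp (Form.K a ψ)))
  | axT (a : A) (φ : Form A) : Prov ((Form.K a φ).imp φ)
  | ax4 (a : A) (φ : Form A) : Prov ((Form.K a φ).imp (Form.K a (Form.K a φ)))
  | ax5 (a : A) (φ : Form A) :
      Prov ((Form.K a φ).neg.imp (Form.K a (Form.K a φ).neg))
  | mp {φ ψ : Form A} : Prov (φ.imp ψ) → Prov φ → Prov ψ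
  | nec (a : A) {φ : Form A} : Prov φ → Prov (Form.K a φ)

section Aux

variable {A : Type} {R : A → Base → Base → Prop}

lemma derivMono {B C : Base} (h : B ⊆ C) {p : ℕ} (d : Deriv B p) : Deriv C p := by
  induction d with
  | step L p mem prem ih => exact Deriv.step L p (h mem) ih

lemma inconMono {B C : Base} (h : B ⊆ C) (hB : Inconsistent B) : Inconsistent C :=
  fun p => derivMono h (hB p)

lemma relSymm {r : Base → Base → Prop} (hr : S5Rel r) {B C : Base} (h : r B C) : r C B :=
  hr.eucl B C B h (hr.refl B)

lemma inconValid (hR : ∀ a, S5Rel (R a)) {B : Base} (hB : Inconsistent B) (φ : Form A) :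
    Valid R B φ := by
  induction φ generalizing B with
  | atom p => exact hB p
  | bot => exact hB
  | imp φ ψ ihφ ihψ => exact fun C hBC _ => ihψ (inconMono hBC hB)
  | K a φ ih => exact fun C hC => ih (((hR a).incon_succ B hB).2 C hC)

lemma validMono (hR : ∀ a, S5Rel (R a)) {φ : Form A} {B C : Base} (h : B ⊆ C)
    (hv : Valid R B φ) : Valid R C φ := by
  induction φ generalizing B C with
  | atom p => exact derivMono h hv
  | bot => exact inconMono h hv
  | imp φ ψ ihφ ihψ => exact fun D hCD => hv D (h.trans hCD)
  | K a φ ih =>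
    intro E hCE
    by_cases hC : Inconsistent C
    · exact inconValid hR (((hR a).incon_succ C hC).2 E hCE) φ
    · have hE : ¬ Inconsistent E := (hR a).con_succ C hC E hCE
      obtain ⟨E', hE'E, hBE'⟩ := (hR a).zag C E hCE hE B h
      exact ih hE'E (hv E' hBE')

lemma dneAux {B : Base} {p : ℕ} (hnp : ¬ Deriv B p) {q : ℕ}
    (d : Deriv (B ∪ {r : Rule | r.1 = ({p} : Finset ℕ)}) q) : Deriv B q := by
  induction d with
  | step L x mem prem ih =>
    rcases mem with hB | hP
    · exact Deriv.step L x hB ih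
    · exact absurd (ih p (by simp only [Set.mem_setOf_eq] at hP; simp [hP])) hnp

lemma dne (hR : ∀ a, S5Rel (R a)) {φ : Form A} {B : Base}
    (h : Valid R B φ.neg.neg) : Valid R B φ := by
  induction φ generalizing B with
  | atom p =>
    by_contra hnp
    have hBD : B ⊆ B ∪ {r : Rule | r.1 = ({p} : Finset ℕ)} := Set.subset_union_left
    have hvD : Valid R (B ∪ {r : Rule | r.1 = ({p} : Finset ℕ)}) (Form.neg (.atom p)) := by
      intro E hDE hEp q
      refine Deriv.step {p} q (hDE (Or.inr rfl)) ?_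
      intro x hx
      rw [Finset.mem_singleton] at hx; subst hx; exact hEp
    exact hnp (dneAux hnp (h _ hBD hvD p))
  | bot => exact h B (subset_refl B) (fun C _ hC => hC)
  | imp φ ψ ihφ ihψ =>
    intro C hBC hφ
    apply ihψ
    intro D hCD hnψ
    apply h D (hBC.trans hCD)
    intro E hDE hE
    exact hnψ E hDE (hE E (subset_refl E) (validMono hR (hCD.trans hDE) hφ))
  | K a φ ih =>
    intro C hRC
    apply ih
    intro D hCD hnφ
    by_contra hD
    have hCB : R a C B := relSymm (hR a) hRC
    obtain ⟨E, hBE, hDE⟩ := (hR a).zig C B hCB D hCD hD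
    have hED : R a E D := relSymm (hR a) hDE
    have hnE : Valid R E (Form.neg (Form.K a φ)) := by
      intro F hEF hF
      by_contra hFc
      obtain ⟨G, hDG, hFG⟩ := (hR a).zig E D hED F hEF hFc
      exact ((hR a).con_succ F hFc G hFG) (hnφ G hDG (hF G hFG))
    exact ((hR a).con_succ D hD E hDE) (h E hBE hnE)

end Aux

/-- Completeness: every theorem of the S5 Hilbert system is valid in the
base-extension semantics. -/
theorem stmt17 {A : Type} (φ : Form A) (h : Prov φ) : ValidAll φ := by
  induction h with
  | ax1 φ ψ =>
    intro R hR B C hBC hφ D hCD hψ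
    exact validMono hR hCD hφ
  | ax2 φ ψ χ =>
    intro R hR B C hBC h1 D hCD h2 E hDE h3
    exact h1 E (hCD.trans hDE) h3 E (subset_refl E) (h2 E hDE h3)
  | ax3 φ ψ =>
    intro R hR B C hBC h1 D hCD h2
    apply dne hR
    intro E hDE h3
    exact h1 E (hCD.trans hDE) h3 E (subset_refl E) (validMono hR hDE h2)
  | axK a φ ψ =>
    intro R hR B C hBC h1 D hCD h2 E hDE
    exact validMono hR hCD h1 E hDE E (subset_refl E) (h2 E hDE)
  | axT a φ =>
    intro R hR B C hBC h1
    exact h1 C ((hR a).refl C)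
  | ax4 a φ =>
    intro R hR B C hBC h1 D hCD E hDE
    exact h1 E ((hR a).trans C D E hCD hDE)
  | ax5 a φ =>
    intro R hR B C hBC h1 D hCD E hDE h2
    by_contra hEc
    obtain ⟨F, hCF, hEF⟩ := (hR a).zig D C (relSymm (hR a) hCD) E hDE hEc
    refine ((hR a).con_succ E hEc F hEF) (h1 F hCF ?_)
    intro G hFG
    exact h2 G ((hR a).trans E F G hEF hFG)
  | mp h1 h2 ih1 ih2 =>
    intro R hR B
    exact ih1 R hR B B (subset_refl B) (ih2 R hR B)
  | nec a h ih =>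
    intro R hR B C hBC
    exact ih R hR C
end
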